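/- For the standard n-simplex with vertices {0,...,n}, the cup-i coproduct formula Δ_0([0,...,n]) = Σ_{U} d_{U^0} ⊗ d_{U^1} over all n-element subsets U of {0,...,n} equals the Alexander–Whitney diagonal: Σ_{j=0}^n [0,...,j] ⊗ [j,...,n]. -/

import Mathlib

open scoped TensorProduct

def posIn (S : Finset ℕ) (u : ℕ) : ℕ := (S.filter (fun v => v ≤ u)).card
def idxFun (U : Finset ℕ) (u : ℕ) : ℕ := (u + posIn U u) % 2
def part0 (U : Finset ℕ) : Finset ℕ := U.filter (fun u => idxFun U u = 0)
def part1 (U : Finset ℕ) : Finset ℕ := U.filter (fun u => idxFun U u = 1)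

variable {V : Type} [LinearOrder V]

/-- `dFace U x` deletes from the simplex `x` the vertices in (0-based) positions `U`. -/
def dFace (U : Finset ℕ) (x : Finset V) : Finset V :=
  ((((x.sort (· ≤ ·)).zipIdx.map Prod.swap).filter (fun p => decide (p.1 ∉ U))).map Prod.snd).toFinset

/-- Mod 2 simplicial chains: the free `𝔽₂`-module on simplices (finite subsets of `V`). -/
abbrev Chains (V : Type) [LinearOrder V] := Finset V →₀ ZMod 2


noncomputable instance {V : Type} [LinearOrder V] :
    Zero (TensorProduct (ZMod 2) (Chains V) (Chains V)) :=
  (inferInstance : AddCommMonoid (TensorProduct (ZMod 2) (Chains V) (Chains V))).toAddMonoid.toZero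

/-- Basis chain corresponding to a simplex. -/
noncomputable def eC (x : Finset V) : Chains V := Finsupp.single x 1

/-- The cup-`i` coproduct on a basis simplex. -/
noncomputable def deltaSimplex (i : ℤ) (x : Finset V) :
    TensorProduct (ZMod 2) (Chains V) (Chains V) :=
  if 0 ≤ i ∧ i ≤ (x.card : ℤ) - 1 then
    ∑ U ∈ Finset.powersetCard (x.card - 1 - i.toNat) (Finset.range x.card),
      eC (dFace (part0 U) x) ⊗ₜ[ZMod 2] eC (dFace (part1 U) x)
  else (0 : TensorProduct (ZMod 2) (Chains V) (Chains V))

/-- The cup-`i` coproduct `Δᵢ`, as a linear map on chains. -/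
noncomputable def deltaMap (V : Type) [LinearOrder V] (i : ℤ) :
    Chains V →ₗ[ZMod 2] TensorProduct (ZMod 2) (Chains V) (Chains V) :=
  Finsupp.lift _ (ZMod 2) (Finset V) (deltaSimplex i)

/-- Mod 2 boundary of a basis simplex. -/
noncomputable def bdSimplex (x : Finset V) : Chains V :=
  if 2 ≤ x.card then ∑ i ∈ Finset.range x.card, eC (dFace {i} x) else 0

/-- Mod 2 simplicial boundary `∂ = Σ dᵢ`. -/
noncomputable def bdMap (V : Type) [LinearOrder V] : Chains V →ₗ[ZMod 2] Chains V :=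
  Finsupp.lift _ (ZMod 2) (Finset V) bdSimplex

/-- Boundary on the tensor product: `∂(a⊗b) = ∂a⊗b + a⊗∂b` (signs trivial mod 2). -/
noncomputable def bdT (V : Type) [LinearOrder V] :
    TensorProduct (ZMod 2) (Chains V) (Chains V) →ₗ[ZMod 2]
      TensorProduct (ZMod 2) (Chains V) (Chains V) :=
  TensorProduct.map (bdMap V) LinearMap.id + TensorProduct.map LinearMap.id (bdMap V)

/-- Transposition of tensor factors `T(a⊗b) = b⊗a`. -/
noncomputable def transp (V : Type) [LinearOrder V] :
    TensorProduct (ZMod 2) (Chains V) (Chains V) →ₗ[ZMod 2]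
      TensorProduct (ZMod 2) (Chains V) (Chains V) :=
  (TensorProduct.comm (ZMod 2) (Chains V) (Chains V)).toLinearMap

/-- Chain map induced by a simplicial (monotone) map `f`. -/
noncomputable def fChain {W : Type} [LinearOrder W] (f : V → W) :
    Chains V →ₗ[ZMod 2] Chains W :=
  Finsupp.lift _ (ZMod 2) (Finset V)
    (fun x => if (x.image f).card = x.card then eC (x.image f) else 0)

/-- Evaluation of a cochain on chains. -/
noncomputable def evalCochain (α : Finset V → ZMod 2) : Chains V →ₗ[ZMod 2] ZMod 2 :=
  Finsupp.lift _ (ZMod 2) (Finset V) α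

/-- Evaluation of a tensor of cochains on a tensor of chains. -/
noncomputable def pairing (α β : Finset V → ZMod 2) :
    TensorProduct (ZMod 2) (Chains V) (Chains V) →ₗ[ZMod 2] ZMod 2 :=
  (LinearMap.mul' (ZMod 2) (ZMod 2)) ∘ₗ TensorProduct.map (evalCochain α) (evalCochain β)

/-- Indicator cochain of a single simplex. -/
def indC (a : Finset V) : Finset V → ZMod 2 := fun y => if y = a then 1 else 0

/-- on the standard `n`-simplex `[0,…,n]`, the cup-0 coproduct formula
equals the Alexander–Whitney diagonal `Σ_j [0,…,j] ⊗ [j,…,n]`. -/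

lemma dFace_range (m : ℕ) (U : Finset ℕ) :
    dFace U (Finset.range m) = (Finset.range m).filter (fun i => i ∉ U) := by
  ext i
  simp only [dFace, Finset.sort_range, List.mem_toFinset, List.mem_map, List.mem_filter,
    List.mem_zipIdx_iff_getElem?, Finset.mem_filter, Finset.mem_range, decide_eq_true_eq,
    Prod.exists, Prod.swap_prod_mk, Prod.mk.injEq]
  constructor
  · rintro ⟨a, b, ⟨⟨b', a', h1, ha, hb⟩, h2⟩, rfl⟩
    rw [ha, hb] at h1
    by_cases h : a < m
    · rw [List.getElem?_eq_getElem (by simpa using h)] at h1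
      simp at h1
      subst h1
      exact ⟨h, h2⟩
    · rw [List.getElem?_eq_none (by simpa using h)] at h1
      exact absurd h1 (by simp)
  · rintro ⟨h1, h2⟩
    exact ⟨i, i, ⟨⟨i, i, by rw [List.getElem?_eq_getElem (by simpa using h1)]; simp, rfl, rfl⟩, h2⟩, rfl⟩

lemma posIn_erase_lt {n j u : ℕ} (hj : j ≤ n) (hu : u < j) :
    posIn ((Finset.range (n+1)).erase j) u = u + 1 := by
  have : ((Finset.range (n+1)).erase j).filter (fun v => v ≤ u) = Finset.range (u+1) := by
    ext v
    simp only [Finset.mem_filter, Finset.mem_erase, Finset.mem_range]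
    omega
  simp [posIn, this]

lemma posIn_erase_gt {n j u : ℕ} (hu : u ≤ n) (hj : j < u) :
    posIn ((Finset.range (n+1)).erase j) u = u := by
  have : ((Finset.range (n+1)).erase j).filter (fun v => v ≤ u) = (Finset.range (u+1)).erase j := by
    ext v
    simp only [Finset.mem_filter, Finset.mem_erase, Finset.mem_range]
    omega
  rw [posIn, this, Finset.card_erase_of_mem (by simp; omega), Finset.card_range]
  omega

lemma part0_erase {n j : ℕ} (hj : j ≤ n) :
    part0 ((Finset.range (n+1)).erase j) = Finset.Icc (j+1) n := by
  ext u
  simp only [part0, Finset.mem_filter]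
  simp only [part0, idxFun, Finset.mem_filter, Finset.mem_erase, Finset.mem_range, Finset.mem_Icc]
  constructor
  · rintro ⟨⟨hne, hun⟩, hidx⟩
    rcases lt_or_gt_of_ne hne with h | h
    · rw [posIn_erase_lt hj h] at hidx; omega
    · omega
  · rintro ⟨h1, h2⟩
    refine ⟨⟨by omega, by omega⟩, ?_⟩
    rw [posIn_erase_gt h2 (by omega)]; omega

lemma part1_erase {n j : ℕ} (hj : j ≤ n) :
    part1 ((Finset.range (n+1)).erase j) = Finset.range j := by
  ext u
  simp only [part1, Finset.mem_filter]
  simp only [part1, idxFun, Finset.mem_filter, Finset.mem_erase, Finset.mem_range]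
  constructor
  · rintro ⟨⟨hne, hun⟩, hidx⟩
    rcases lt_or_gt_of_ne hne with h | h
    · exact h
    · rw [posIn_erase_gt (by omega) h] at hidx; omega
  · intro h
    refine ⟨⟨by omega, by omega⟩, ?_⟩
    rw [posIn_erase_lt hj h]; omega

lemma key_term (n j : ℕ) (hj : j ≤ n) :
    eC (dFace (part0 ((Finset.range (n+1)).erase j)) (Finset.range (n+1))) ⊗ₜ[ZMod 2]
      eC (dFace (part1 ((Finset.range (n+1)).erase j)) (Finset.range (n+1)))
    = eC (Finset.range (j+1)) ⊗ₜ[ZMod 2] eC (Finset.Icc j n) := by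
  rw [part0_erase hj, part1_erase hj, dFace_range, dFace_range]
  congr 2
  · ext i
    simp only [Finset.mem_filter, Finset.mem_range, Finset.mem_Icc]
    omega
  · ext i
    simp only [Finset.mem_filter, Finset.mem_range, Finset.mem_Icc]
    omega

lemma powersetCard_eq_image (n : ℕ) :
    Finset.powersetCard n (Finset.range (n+1)) =
      (Finset.range (n+1)).image (fun j => (Finset.range (n+1)).erase j) := by
  ext U
  simp only [Finset.mem_powersetCard, Finset.mem_image, Finset.mem_range]
  constructor
  · rintro ⟨hsub, hcard⟩
    have h1 : (Finset.range (n+1) \ U).card = 1 := by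
      rw [Finset.card_sdiff_of_subset hsub, hcard, Finset.card_range]
      omega
    obtain ⟨j, hj⟩ := Finset.card_eq_one.mp h1
    have hjm : j ∈ Finset.range (n+1) := by
      have : j ∈ Finset.range (n+1) \ U := hj ▸ Finset.mem_singleton_self j
      exact (Finset.mem_sdiff.mp this).1
    refine ⟨j, Finset.mem_range.mp hjm, ?_⟩
    have hdd : Finset.range (n+1) \ (Finset.range (n+1) \ U) = U := by
      ext v
      simp only [Finset.mem_sdiff, not_and, not_not]
      exact ⟨fun h => h.2 h.1, fun hv => ⟨hsub hv, fun _ => hv⟩⟩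
    rw [Finset.erase_eq, ← hj, hdd]
  · rintro ⟨j, hjm, rfl⟩
    refine ⟨Finset.erase_subset _ _, ?_⟩
    rw [Finset.card_erase_of_mem (Finset.mem_range.mpr hjm), Finset.card_range]
    omega

theorem stmt_7 (n : ℕ) :
    ∑ U ∈ Finset.powersetCard n (Finset.range (n + 1)),
        eC (dFace (part0 U) (Finset.range (n + 1))) ⊗ₜ[ZMod 2]
          eC (dFace (part1 U) (Finset.range (n + 1)))
      = ∑ j ∈ Finset.range (n + 1),
          eC (Finset.range (j + 1)) ⊗ₜ[ZMod 2] eC (Finset.Icc j n) := by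
  rw [powersetCard_eq_image n,
    Finset.sum_image (fun x hx y hy h => Finset.erase_injOn _ hx hy h)]
  exact Finset.sum_congr rfl fun j hj =>
    key_term n j (Nat.lt_succ_iff.mp (Finset.mem_range.mp hj))
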